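/- Let A be a principal ideal domain with fraction field F, let C• be a cochain complex of finitely generated free A-modules, and fix an integer i. If H^i(C• ⊗_A F) = 0 and H^i(C• ⊗_A A/(a)) = 0 for every nonzero a ∈ A, then H^i(C•) = 0. -/

import Mathlib

open scoped TensorProduct
open TensorProduct Pointwise

section Key

variable {A : Type} [CommRing A] [IsDomain A] [IsPrincipalIdealRing A]
variable {M N P : Type} [AddCommGroup M] [AddCommGroup N] [AddCommGroup P]
  [Module A M] [Module A N] [Module A P]
  [Module.Free A N] [Module.Finite A N] [Module.Free A P]

theorem key (f : M →ₗ[A] N) (g : N →ₗ[A] P) (hgf : ∀ m, g (f m) = 0)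
    (hF : ∀ x : N ⊗[A] FractionRing A, TensorProduct.map g LinearMap.id x = 0 →
      ∃ y : M ⊗[A] FractionRing A, TensorProduct.map f LinearMap.id y = x)
    (hQ : ∀ a : A, a ≠ 0 → ∀ x : N ⊗[A] (A ⧸ Ideal.span {a}),
      TensorProduct.map g LinearMap.id x = 0 →
      ∃ y : M ⊗[A] (A ⧸ Ideal.span {a}), TensorProduct.map f LinearMap.id y = x)
    (x : N) (hx : g x = 0) : ∃ y, f y = x := by
  classical
  set F := FractionRing A
  -- injectivity of N → N ⊗ F
  have hNinj : ∀ n : N, n ⊗ₜ[A] (1 : F) = 0 → n = 0 := by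
    intro n hn
    have hinj : Function.Injective
        (LinearMap.lTensor N (Algebra.linearMap A F)) :=
      Module.Flat.lTensor_preserves_injective_linearMap _
        (IsFractionRing.injective A F)
    have h1 : LinearMap.lTensor N (Algebra.linearMap A F) (n ⊗ₜ[A] (1 : A)) = 0 := by
      simpa using hn
    have h2 : n ⊗ₜ[A] (1 : A) = 0 := by
      apply hinj; simpa using h1
    have := congrArg (TensorProduct.rid A N) h2
    simpa using this
  -- clearing denominators
  have hclear : ∀ v : M ⊗[A] F, ∃ (s : A) (m : M), s ≠ 0 ∧ s • v = m ⊗ₜ[A] (1 : F) := by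
    intro v
    induction v using TensorProduct.induction_on with
    | zero => exact ⟨1, 0, one_ne_zero, by simp⟩
    | tmul m c =>
      obtain ⟨⟨r, s⟩, (hs : IsLocalization.mk' F r s = c)⟩ :=
        IsLocalization.mk'_surjective (nonZeroDivisors A) c
      refine ⟨(s : A), r • m, nonZeroDivisors.coe_ne_zero s, ?_⟩
      have hc : (s : A) • c = algebraMap A F r := by
        rw [← hs, Algebra.smul_def, IsLocalization.mk'_spec']
      calc (s : A) • (m ⊗ₜ[A] c) = m ⊗ₜ[A] ((s : A) • c) := by rw [tmul_smul]
        _ = m ⊗ₜ[A] (algebraMap A F r) := by rw [hc]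
        _ = m ⊗ₜ[A] (r • (1 : F)) := by rw [Algebra.algebraMap_eq_smul_one]
        _ = (r • m) ⊗ₜ[A] (1 : F) := by rw [tmul_smul, smul_tmul']
    | add u w hu hw =>
      obtain ⟨s, m, hs, h1⟩ := hu
      obtain ⟨t, n, ht, h2⟩ := hw
      refine ⟨s * t, t • m + s • n, mul_ne_zero hs ht, ?_⟩
      rw [smul_add, TensorProduct.add_tmul]
      rw [mul_comm s t, mul_smul, h1, mul_comm t s, mul_smul, h2,
        smul_tmul', smul_tmul']
  -- torsion
  have tor : ∀ n : N, g n = 0 → ∃ (a : A) (m : M), a ≠ 0 ∧ f m = a • n := by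
    intro n hn
    have h0 : TensorProduct.map g LinearMap.id (n ⊗ₜ[A] (1 : F)) = 0 := by
      simp [hn]
    obtain ⟨y, hy⟩ := hF _ h0
    obtain ⟨s, m, hs, hsm⟩ := hclear y
    refine ⟨s, m, hs, ?_⟩
    have h1 : f m ⊗ₜ[A] (1 : F) = (s • n) ⊗ₜ[A] (1 : F) := by
      calc f m ⊗ₜ[A] (1 : F)
          = TensorProduct.map f LinearMap.id (m ⊗ₜ[A] (1 : F)) := by simp
        _ = TensorProduct.map f LinearMap.id (s • y) := by rw [hsm]
        _ = s • (n ⊗ₜ[A] (1 : F)) := by rw [map_smul, hy]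
        _ = (s • n) ⊗ₜ[A] (1 : F) := by rw [smul_tmul']
    have h2 : (f m - s • n) ⊗ₜ[A] (1 : F) = 0 := by
      rw [TensorProduct.sub_tmul, h1, sub_self]
    have := hNinj _ h2
    linear_combination (norm := module) this
  -- divisibility
  have div : ∀ a : A, a ≠ 0 → ∀ n : N, g n = 0 →
      ∃ (n' : N) (m : M), g n' = 0 ∧ n = a • n' + f m := by
    intro a ha n hn
    set I := Ideal.span ({a} : Set A) with hI
    have h0 : TensorProduct.map g LinearMap.id (n ⊗ₜ[A] (1 : A ⧸ I)) = 0 := by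
      simp [hn]
    obtain ⟨y, hy⟩ := hQ a ha _ h0
    have hsurj : ∀ v : M ⊗[A] (A ⧸ I), ∃ m : M, m ⊗ₜ[A] (1 : A ⧸ I) = v := by
      intro v
      induction v using TensorProduct.induction_on with
      | zero => exact ⟨0, by simp⟩
      | tmul m q =>
        obtain ⟨r, rfl⟩ := Ideal.Quotient.mk_surjective q
        refine ⟨r • m, ?_⟩
        rw [smul_tmul]
        congr 1
        rw [← Algebra.algebraMap_eq_smul_one, Ideal.Quotient.algebraMap_eq]
      | add u w hu hw =>
        obtain ⟨m, hm⟩ := hu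
        obtain ⟨m', hm'⟩ := hw
        exact ⟨m + m', by rw [TensorProduct.add_tmul, hm, hm']⟩
    obtain ⟨m, hm⟩ := hsurj y
    have h1 : (n - f m) ⊗ₜ[A] (1 : A ⧸ I) = 0 := by
      rw [TensorProduct.sub_tmul]
      have : f m ⊗ₜ[A] (1 : A ⧸ I) = n ⊗ₜ[A] (1 : A ⧸ I) := by
        calc f m ⊗ₜ[A] (1 : A ⧸ I)
            = TensorProduct.map f LinearMap.id (m ⊗ₜ[A] (1 : A ⧸ I)) := by simp
          _ = n ⊗ₜ[A] (1 : A ⧸ I) := by rw [hm, hy]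
      rw [this, sub_self]
    have hmem : n - f m ∈ a • (⊤ : Submodule A N) := by
      rw [← Submodule.ideal_span_singleton_smul]
      have h2 := congrArg (TensorProduct.tensorQuotEquivQuotSMul N I) h1
      rw [map_zero] at h2
      have h3 : (1 : A ⧸ I) = Ideal.Quotient.mk I 1 := rfl
      rw [h3, TensorProduct.tensorQuotEquivQuotSMul_tmul_mk, one_smul] at h2
      exact (Submodule.Quotient.mk_eq_zero _).mp h2
    rw [← SetLike.mem_coe, Submodule.coe_pointwise_smul] at hmem
    obtain ⟨n', -, hn'⟩ := Set.mem_smul_set.mp hmem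
    have gn' : g n' = 0 := by
      have h4 : a • g n' = 0 := by
        rw [← map_smul, hn', map_sub, hn, hgf, sub_zero]
      exact (smul_eq_zero.mp h4).resolve_left ha
    exact ⟨n', m, gn', by rw [hn']; abel⟩
  -- the cohomology module
  haveI : IsNoetherianRing A := PrincipalIdealRing.isNoetherianRing
  set K := LinearMap.ker g with hK
  set B : Submodule A K := (LinearMap.range f).comap K.subtype with hB
  haveI : Module.Finite A K := Module.Finite.iff_fg.mpr (IsNoetherian.noetherian K)
  haveI : Module.Finite A (K ⧸ B) := Module.Finite.quotient A B
  obtain ⟨S, hS⟩ : ∃ S : Finset (K ⧸ B), Submodule.span A (S : Set (K ⧸ B)) = ⊤ :=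
    Module.finite_def.mp inferInstance
  have htor : ∀ h : K ⧸ B, ∃ a : A, a ≠ 0 ∧ a • h = 0 := by
    intro h
    obtain ⟨⟨n, hn⟩, rfl⟩ := Submodule.Quotient.mk_surjective B h
    obtain ⟨a, m, ha, hfm⟩ := tor n hn
    refine ⟨a, ha, ?_⟩
    rw [← Submodule.Quotient.mk_smul, Submodule.Quotient.mk_eq_zero]
    exact ⟨m, hfm⟩
  choose u hu1 hu2 using htor
  have hcne : (∏ h ∈ S, u h) ≠ 0 := Finset.prod_ne_zero_iff.mpr fun h _ => hu1 h
  have hcall : ∀ h : K ⧸ B, (∏ h ∈ S, u h) • h = 0 := by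
    intro h
    have hmem : h ∈ Submodule.span A (S : Set (K ⧸ B)) := by
      rw [hS]; exact Submodule.mem_top
    induction hmem using Submodule.span_induction with
    | mem z hz =>
      obtain ⟨t, ht⟩ := Finset.dvd_prod_of_mem u hz
      rw [ht, mul_comm, mul_smul, hu2, smul_zero]
    | zero => simp
    | add z w _ _ ihz ihw => rw [smul_add, ihz, ihw, add_zero]
    | smul r z _ ihz => rw [smul_comm, ihz, smul_zero]
  obtain ⟨x', m, hgx', hxeq⟩ := div _ hcne x hx
  have hx'K : x' ∈ K := hgx'
  have hfmK : f m ∈ K := hgf m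
  have hKeq : (⟨x, hx⟩ : K) = (∏ h ∈ S, u h) • ⟨x', hx'K⟩ + ⟨f m, hfmK⟩ := by
    ext
    simpa using hxeq
  have hzero : Submodule.Quotient.mk (p := B) (⟨x, hx⟩ : K) = 0 := by
    rw [hKeq, Submodule.Quotient.mk_add, Submodule.Quotient.mk_smul, hcall,
      zero_add, Submodule.Quotient.mk_eq_zero]
    exact ⟨m, rfl⟩
  rw [Submodule.Quotient.mk_eq_zero] at hzero
  exact hzero

end Key

section Cast

variable {A : Type} [CommRing A] {C : ℤ → Type} [∀ k, AddCommGroup (C k)]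
  [∀ k, Module A (C k)]

/-- Cast between propositionally equal degrees of a graded module. -/
def castL {m n : ℤ} (h : m = n) : C m ≃ₗ[A] C n := h ▸ LinearEquiv.refl A (C m)

lemma castL_rfl {m : ℤ} : (castL (A := A) (C := C) (rfl : m = m)) = LinearEquiv.refl A (C m) := rfl

lemma eqRec_eq_castL {m n : ℤ} (h : m = n) (v : C m) :
    (h ▸ v : C n) = castL (A := A) h v := by subst h; rfl

lemma castL_d (d : ∀ k : ℤ, C k →ₗ[A] C (k + 1)) {m n : ℤ} (h : m = n) (v : C m) :
    d n (castL (A := A) h v) = castL (A := A) (show m + 1 = n + 1 by rw [h]) (d m v) := by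
  subst h; rfl

lemma eqRec_tensor {V : Type} [AddCommGroup V] [Module A V] {m n : ℤ} (h : m = n)
    (w : C m ⊗[A] V) :
    (h ▸ w : C n ⊗[A] V)
      = TensorProduct.map (castL (A := A) h).toLinearMap LinearMap.id w := by
  subst h
  rw [castL_rfl, LinearEquiv.refl_toLinearMap, TensorProduct.map_id]
  rfl

end Cast

/-- Vanishing of the `i`-th cohomology of a cochain complex `(C, d)`:
every `i`-cocycle is a coboundary. -/
def VanishH (A : Type) [CommRing A] (C : ℤ → Type) [∀ k, AddCommGroup (C k)]
    [∀ k, Module A (C k)] (d : ∀ k : ℤ, C k →ₗ[A] C (k + 1)) (i : ℤ) : Prop :=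
  ∀ x : C i, d i x = 0 → ∃ y : C (i - 1), (by omega : i - 1 + 1 = i) ▸ d (i - 1) y = x

/-- **Detecting vanishing of cohomology over a PID via residue fields and the fraction
field.**  Let `A` be a PID with fraction field `F` and `C•` a cochain complex of finitely
generated free `A`-modules.  If `H^i(C• ⊗ F) = 0` and `H^i(C• ⊗ A/(a)) = 0` for every
nonzero `a ∈ A`, then `H^i(C•) = 0`. -/
theorem vanishH_of_baseChanges (A : Type) [CommRing A] [IsDomain A] [IsPrincipalIdealRing A]
    (C : ℤ → Type) [∀ k, AddCommGroup (C k)] [∀ k, Module A (C k)]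
    [∀ k, Module.Free A (C k)] [∀ k, Module.Finite A (C k)]
    (d : ∀ k : ℤ, C k →ₗ[A] C (k + 1))
    (hdd : ∀ k : ℤ, (d (k + 1)).comp (d k) = 0)
    (i : ℤ)
    (hF : VanishH A (fun k => C k ⊗[A] FractionRing A)
      (fun k => TensorProduct.map (d k) (LinearMap.id : FractionRing A →ₗ[A] FractionRing A)) i)
    (hQ : ∀ a : A, a ≠ 0 → VanishH A (fun k => C k ⊗[A] (A ⧸ Ideal.span {a}))
      (fun k => TensorProduct.map (d k)
        (LinearMap.id : (A ⧸ Ideal.span {a}) →ₗ[A] (A ⧸ Ideal.span {a}))) i) :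
    VanishH A C d i := by
  intro x hx
  have h1 : (i - 1) + 1 = i := by omega
  set e : C (i - 1 + 1) ≃ₗ[A] C i := castL (A := A) h1 with he
  have hmapcomp : ∀ (V : Type) [AddCommGroup V] [Module A V] (w : C (i - 1) ⊗[A] V),
      TensorProduct.map (e.toLinearMap ∘ₗ d (i - 1)) (LinearMap.id (R := A) (M := V)) w
        = TensorProduct.map e.toLinearMap LinearMap.id
            (TensorProduct.map (d (i - 1)) LinearMap.id w) := by
    intro V _ _ w
    have hmc := TensorProduct.map_comp e.toLinearMap (LinearMap.id (R := A) (M := V))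
      (d (i - 1)) LinearMap.id
    rw [LinearMap.id_comp] at hmc
    rw [hmc]
    rfl
  have hgf : ∀ m : C (i - 1), d i ((e.toLinearMap ∘ₗ d (i - 1)) m) = 0 := by
    intro m
    have hz : d (i - 1 + 1) (d (i - 1) m) = 0 := by
      have := congrArg (fun φ => φ m) (hdd (i - 1))
      simpa using this
    show d i (e (d (i - 1) m)) = 0
    rw [he, castL_d d h1, hz, map_zero]
  have hF' : ∀ v : C i ⊗[A] FractionRing A,
      TensorProduct.map (d i) LinearMap.id v = 0 →
      ∃ y : C (i - 1) ⊗[A] FractionRing A,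
        TensorProduct.map (e.toLinearMap ∘ₗ d (i - 1)) LinearMap.id y = v := by
    intro v hv
    obtain ⟨y, hy⟩ := hF v hv
    refine ⟨y, ?_⟩
    rw [hmapcomp, he, ← eqRec_tensor h1]
    exact hy
  have hQ' : ∀ a : A, a ≠ 0 → ∀ v : C i ⊗[A] (A ⧸ Ideal.span {a}),
      TensorProduct.map (d i) LinearMap.id v = 0 →
      ∃ y : C (i - 1) ⊗[A] (A ⧸ Ideal.span {a}),
        TensorProduct.map (e.toLinearMap ∘ₗ d (i - 1)) LinearMap.id y = v := by
    intro a ha v hv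
    obtain ⟨y, hy⟩ := hQ a ha v hv
    refine ⟨y, ?_⟩
    rw [hmapcomp, he, ← eqRec_tensor h1]
    exact hy
  obtain ⟨y, hy⟩ := key (e.toLinearMap ∘ₗ d (i - 1)) (d i) hgf hF' hQ' x hx
  refine ⟨y, ?_⟩
  rw [eqRec_eq_castL (A := A) (C := C) h1 (d (i - 1) y)]
  exact hy
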